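/- (Central Sets Theorem.) Let (S,·) be a commutative semigroup, let e be a minimal idempotent in βS, and let A ∈ e. For each l ∈ ℕ let ⟨y_{l,n}⟩_{n=0}^∞ be a sequence in S. Then there exist a sequence ⟨a_n⟩_{n=0}^∞ in S and a sequence α_0 < α_1 < … in P_f(ω) such that for every g ∈ Φ one has FP(⟨a_n · ∏_{t∈α_n} y_{g(n),t}⟩_{n=0}^∞) ⊆ A. -/

import Mathlib

/- The semigroup structure on `βS = Ultrafilter S`, with
`A ∈ p * q ↔ {s | {t | s * t ∈ A} ∈ q} ∈ p`. -/
attribute [local instance] Ultrafilter.mul Ultrafilter.semigroup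

/-- The ordered product of a `Monoid`-valued function over a finite set of
natural-number indices, the factors being taken in increasing order of the indices. -/
def oListProd {M : Type*} [Monoid M] (f : ℕ → M) (α : Finset ℕ) : M :=
  ((α.sort (· ≤ ·)).map f).prod

/-- The ordered product `∏_{t ∈ α} f t` for a semigroup-valued `f`, computed in the
monoid `WithOne S`.  For nonempty `α` this is the genuine product (in increasing order
of indices) of the `f t ∈ S`, viewed in `WithOne S`. -/
def oProd {S : Type*} [Semigroup S] (f : ℕ → S) (α : Finset ℕ) : WithOne S :=
  oListProd (fun t => (f t : WithOne S)) α

/-- An ultrafilter `e ∈ βS` is a minimal idempotent iff `e * e = e` and every idempotent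
`f ∈ βS` with `f * e = e * f = f` equals `e`. -/
def IsMinimalIdempotent {S : Type*} [Semigroup S] (e : Ultrafilter S) : Prop :=
  e * e = e ∧ ∀ f : Ultrafilter S, f * f = f → f * e = f → e * f = f → f = e

set_option linter.unusedSectionVars false
set_option linter.unusedVariables false


theorem oListProd_congr {M : Type*} [Monoid M] {f g : ℕ → M} {α : Finset ℕ}
    (h : ∀ t ∈ α, f t = g t) : oListProd f α = oListProd g α := by
  unfold oListProd
  congr 1
  exact List.map_congr_left fun t ht => h t (Finset.mem_sort _ |>.mp ht)

theorem oListProd_singleton {M : Type*} [Monoid M] (f : ℕ → M) (t : ℕ) :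
    oListProd f {t} = f t := by
  simp [oListProd, Finset.sort_singleton]

theorem sort_union {α β : Finset ℕ} (hlt : ∀ s ∈ α, ∀ t ∈ β, s < t) :
    (α ∪ β).sort (· ≤ ·) = α.sort (· ≤ ·) ++ β.sort (· ≤ ·) := by
  have hdisj : Disjoint α β := by
    rw [Finset.disjoint_left]
    intro a ha hb
    exact lt_irrefl a (hlt a ha a hb)
  refine (fun hp h1 h2 => List.Perm.eq_of_pairwise' (r := (· ≤ ·)) h1 h2 hp) ?_ ?_ ?_
  · rw [← Multiset.coe_eq_coe]
    have h1 : ((Finset.sort α (· ≤ ·) ++ Finset.sort β (· ≤ ·) : List ℕ) : Multiset ℕ)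
        = α.val + β.val := by
      rw [← Multiset.coe_add, Finset.sort_eq, Finset.sort_eq]
    rw [h1, Finset.sort_eq, ← Finset.disjUnion_eq_union _ _ hdisj]
    rfl
  · exact Finset.pairwise_sort _ _
  · rw [List.pairwise_append]
    refine ⟨Finset.pairwise_sort _ _, Finset.pairwise_sort _ _, ?_⟩
    intro a ha b hb
    exact (hlt a (Finset.mem_sort _ |>.mp ha) b (Finset.mem_sort _ |>.mp hb)).le

theorem oListProd_union {M : Type*} [Monoid M] (f : ℕ → M) {α β : Finset ℕ}
    (hlt : ∀ s ∈ α, ∀ t ∈ β, s < t) :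
    oListProd f (α ∪ β) = oListProd f α * oListProd f β := by
  unfold oListProd
  rw [sort_union hlt, List.map_append, List.prod_append]

theorem exists_coe_listProd {S : Type*} [Semigroup S] (c : ℕ → S) :
    ∀ l : List ℕ, l ≠ [] → ∃ s : S, (l.map fun n => (c n : WithOne S)).prod = ↑s := by
  intro l
  induction l with
  | nil => simp
  | cons a t ih =>
    intro _
    rcases t.eq_nil_or_concat with rfl | _
    · exact ⟨c a, by simp⟩
    · have ht : t ≠ [] := by rintro rfl; simp_all
      obtain ⟨s, hs⟩ := ih ht
      exact ⟨c a * s, by simp [hs]⟩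

theorem exists_coe_oListProd {S : Type*} [Semigroup S] (c : ℕ → S) {β : Finset ℕ}
    (h : β.Nonempty) : ∃ s : S, oListProd (fun n => (c n : WithOne S)) β = ↑s := by
  apply exists_coe_listProd
  obtain ⟨x, hx⟩ := h
  exact List.ne_nil_of_mem ((Finset.mem_sort _).mpr hx)
open scoped Classical in
noncomputable def cval {S : Type*} [Semigroup S] [Nonempty S] (x : WithOne S) : S :=
  if h : ∃ s : S, x = ↑s then h.choose else Classical.arbitrary S

theorem cval_coe {S : Type*} [Semigroup S] [Nonempty S] (s : S) : cval (↑s : WithOne S) = s := by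
  have h : ∃ s' : S, (↑s : WithOne S) = ↑s' := ⟨s, rfl⟩
  classical
  rw [cval]
  rw [dif_pos h]
  have := h.choose_spec
  exact_mod_cast this.symm

/-- `wS y l α` : the `S`-valued ordered product `∏_{t ∈ α} y l t` (junk if `α = ∅`). -/
noncomputable def wS {S : Type*} [Semigroup S] [Nonempty S] (y : ℕ → ℕ → S) (l : ℕ)
    (α : Finset ℕ) : S := cval (oProd (y l) α)

theorem coe_wS {S : Type*} [Semigroup S] [Nonempty S] (y : ℕ → ℕ → S) (l : ℕ)
    {α : Finset ℕ} (h : α.Nonempty) : (↑(wS y l α) : WithOne S) = oProd (y l) α := by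
  obtain ⟨s, hs⟩ := exists_coe_oListProd (y l) h
  rw [wS, oProd, hs, cval_coe]

theorem wS_union {S : Type*} [Semigroup S] [Nonempty S] (y : ℕ → ℕ → S) (l : ℕ)
    {α β : Finset ℕ} (hα : α.Nonempty) (hβ : β.Nonempty)
    (hlt : ∀ s ∈ α, ∀ t ∈ β, s < t) :
    wS y l (α ∪ β) = wS y l α * wS y l β := by
  have h1 : (↑(wS y l (α ∪ β)) : WithOne S) = ↑(wS y l α * wS y l β) := by
    rw [coe_wS _ _ (hα.mono Finset.subset_union_left), WithOne.coe_mul,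
      coe_wS _ _ hα, coe_wS _ _ hβ, oProd, oProd, oProd, oListProd_union _ hlt]
  exact_mod_cast h1

theorem ultra_mem_mul {M : Type*} [Semigroup M] {p q : Ultrafilter M} {A : Set M} :
    A ∈ p * q ↔ {s | {t | s * t ∈ A} ∈ q} ∈ p := Iff.rfl

theorem pure_mul_pure {M : Type*} [Semigroup M] (a b : M) :
    (pure a : Ultrafilter M) * pure b = pure (a * b) := by
  apply Ultrafilter.coe_inj.mp
  apply Filter.ext'
  intro p
  rw [Ultrafilter.eventually_mul]
  simp

theorem continuous_pure_mul {M : Type*} [Semigroup M] (a : M) :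
    Continuous (fun q : Ultrafilter M => (pure a : Ultrafilter M) * q) := by
  apply ultrafilterBasis_is_basis.continuous_iff.2
  rintro s ⟨B, rfl⟩
  have : (fun q : Ultrafilter M => (pure a : Ultrafilter M) * q) ⁻¹'
      {u : Ultrafilter M | B ∈ u} = {u : Ultrafilter M | {t | a * t ∈ B} ∈ u} := by
    ext q
    simp only [Set.mem_preimage, Set.mem_setOf_eq]
    rw [ultra_mem_mul]
    simp
  rw [this]
  exact ultrafilter_isOpen_basic _
section KeyLemma
set_option linter.unusedSectionVars false

variable {S : Type*} [CommSemigroup S] [Nonempty S]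

/-- The tuple `(pure (a · ∏_{t∈α} y l t))_{l ∈ ℕ}` in `Y = (βS)^ω`. -/
noncomputable def xt (y : ℕ → ℕ → S) (a : S) (α : Finset ℕ) : ℕ → Ultrafilter S :=
  fun l => pure (a * wS y l α)

/-- The diagonal tuple `(pure a)_{l ∈ ℕ}`. -/
def diagY (a : S) : ℕ → Ultrafilter S := fun _ => pure a

/-- Generators of the ideal `E`: tuples `xt y a α` with `α` bounded below by `m`. -/
noncomputable def EGen (y : ℕ → ℕ → S) (m : ℕ) : Set (ℕ → Ultrafilter S) :=
  {x | ∃ a α, α.Nonempty ∧ (∀ t ∈ α, m < t) ∧ x = xt y a α}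

/-- Generators of the subsemigroup `D`. -/
noncomputable def DGen (y : ℕ → ℕ → S) (m : ℕ) : Set (ℕ → Ultrafilter S) :=
  EGen y m ∪ Set.range (diagY (S := S))

theorem pureTuple_mul (c d : ℕ → S) :
    ((fun l => pure (c l) : ℕ → Ultrafilter S) * fun l => pure (d l)) =
      fun l => (pure (c l * d l) : Ultrafilter S) := by
  funext l
  exact pure_mul_pure (c l) (d l)

theorem diagY_mul_diagY (a b : S) : diagY a * diagY b = diagY (a * b) :=
  pureTuple_mul (fun _ => a) (fun _ => b)

theorem diagY_mul_xt (y : ℕ → ℕ → S) (a b : S) (β : Finset ℕ) :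
    diagY a * xt y b β = xt y (a * b) β := by
  funext l
  show (pure a : Ultrafilter S) * pure (b * wS y l β) = (pure (a * b * wS y l β) : Ultrafilter S)
  rw [pure_mul_pure, mul_assoc]

theorem xt_mul_diagY (y : ℕ → ℕ → S) (a b : S) (α : Finset ℕ) :
    xt y a α * diagY b = xt y (a * b) α := by
  funext l
  show (pure (a * wS y l α) : Ultrafilter S) * pure b = (pure (a * b * wS y l α) : Ultrafilter S)
  rw [pure_mul_pure, mul_right_comm]

theorem xt_mul_xt (y : ℕ → ℕ → S) (a b : S) {α β : Finset ℕ} (hα : α.Nonempty)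
    (hβ : β.Nonempty) (hlt : ∀ s ∈ α, ∀ t ∈ β, s < t) :
    xt y a α * xt y b β = xt y (a * b) (α ∪ β) := by
  funext l
  show (pure (a * wS y l α) : Ultrafilter S) * pure (b * wS y l β) = pure (a * b * wS y l (α ∪ β))
  rw [pure_mul_pure, wS_union y l hα hβ hlt, mul_mul_mul_comm]

theorem cont_mul_right (q : ℕ → Ultrafilter S) :
    Continuous (fun x : ℕ → Ultrafilter S => x * q) := by
  apply continuous_pi
  intro l
  exact (Ultrafilter.continuous_mul_left (q l)).comp (continuous_apply l)

theorem cont_pureTuple_mul (c : ℕ → S) :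
    Continuous (fun q : ℕ → Ultrafilter S => (fun l => pure (c l) : ℕ → Ultrafilter S) * q) := by
  apply continuous_pi
  intro l
  exact (continuous_pure_mul (c l)).comp (continuous_apply l)

theorem pureTuple_mul_mem_closure {V W : Set (ℕ → Ultrafilter S)} {q : ℕ → Ultrafilter S}
    (hq : q ∈ closure V) (c : ℕ → S)
    (hxy : ∀ v ∈ V, (fun l => pure (c l) : ℕ → Ultrafilter S) * v ∈ W) :
    (fun l => pure (c l) : ℕ → Ultrafilter S) * q ∈ closure W := by
  have h1 : (fun q' => (fun l => pure (c l) : ℕ → Ultrafilter S) * q') '' closure V ⊆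
      closure ((fun q' => (fun l => pure (c l) : ℕ → Ultrafilter S) * q') '' V) :=
    image_closure_subset_closure_image (cont_pureTuple_mul c)
  have h2 := h1 ⟨q, hq, rfl⟩
  refine closure_mono ?_ h2
  rintro _ ⟨v, hv, rfl⟩
  exact hxy v hv

theorem mul_closure_right {U W : Set (ℕ → Ultrafilter S)} {p : ℕ → Ultrafilter S}
    (q : ℕ → Ultrafilter S) (hp : p ∈ closure U)
    (h : ∀ x ∈ U, x * q ∈ closure W) : p * q ∈ closure W := by
  have h1 : (fun x => x * q) '' closure U ⊆ closure ((fun x => x * q) '' U) :=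
    image_closure_subset_closure_image (cont_mul_right q)
  have h2 := h1 ⟨p, hp, rfl⟩
  have h3 : closure ((fun x => x * q) '' U) ⊆ closure (closure W) := by
    apply closure_mono
    rintro _ ⟨x, hx, rfl⟩
    exact h x hx
  rw [closure_closure] at h3
  exact h3 h2

theorem mul_mem_iInter_closure (U V W : ℕ → Set (ℕ → Ultrafilter S))
    (hpure : ∀ m, ∀ x ∈ U m, ∃ c : ℕ → S, x = fun l => pure (c l))
    (hstep : ∀ m, ∀ x ∈ U m, ∃ M, ∀ v ∈ V M, x * v ∈ W m)
    {p q : ℕ → Ultrafilter S} (hp : p ∈ ⋂ m, closure (U m))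
    (hq : q ∈ ⋂ m, closure (V m)) : p * q ∈ ⋂ m, closure (W m) := by
  rw [Set.mem_iInter] at hp hq ⊢
  intro m
  apply mul_closure_right q (hp m)
  intro x hx
  obtain ⟨M, hM⟩ := hstep m x hx
  obtain ⟨c, rfl⟩ := hpure m x hx
  exact pureTuple_mul_mem_closure (hq M) c hM

theorem dgen_pure (y : ℕ → ℕ → S) (m : ℕ) :
    ∀ x ∈ DGen y m, ∃ c : ℕ → S, x = fun l => pure (c l) := by
  rintro x (⟨a, α, _, _, rfl⟩ | ⟨a, rfl⟩)
  · exact ⟨fun l => a * wS y l α, rfl⟩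
  · exact ⟨fun _ => a, rfl⟩

theorem egen_pure (y : ℕ → ℕ → S) (m : ℕ) :
    ∀ x ∈ EGen y m, ∃ c : ℕ → S, x = fun l => pure (c l) :=
  fun x hx => dgen_pure y m x (Or.inl hx)

/-- Key multiplication step on generators : an `E`-generator times a sufficiently late
`D`-generator is an `E`-generator. -/
theorem egen_step (y : ℕ → ℕ → S) (m : ℕ) :
    ∀ x ∈ EGen y m, ∃ M, ∀ v ∈ DGen y M, x * v ∈ EGen y m := by
  rintro x ⟨a, α, hαne, hαm, rfl⟩
  refine ⟨α.max' hαne, ?_⟩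
  rintro v (⟨b, β, hβne, hβM, rfl⟩ | ⟨b, rfl⟩)
  · have hlt : ∀ s ∈ α, ∀ t ∈ β, s < t := fun s hs t ht =>
      lt_of_le_of_lt (α.le_max' s hs) (hβM t ht)
    rw [xt_mul_xt y a b hαne hβne hlt]
    refine ⟨a * b, α ∪ β, hαne.mono Finset.subset_union_left, ?_, rfl⟩
    intro t ht
    rcases Finset.mem_union.mp ht with h | h
    · exact hαm t h
    · exact lt_trans (hαm _ (α.max'_mem hαne)) (hβM t h)
  · rw [xt_mul_diagY]
    exact ⟨a * b, α, hαne, hαm, rfl⟩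

theorem dgen_step_d (y : ℕ → ℕ → S) (m : ℕ) :
    ∀ x ∈ DGen y m, ∃ M, ∀ v ∈ DGen y M, x * v ∈ DGen y m := by
  rintro x (hx | ⟨a, rfl⟩)
  · obtain ⟨M, hM⟩ := egen_step y m x hx
    exact ⟨M, fun v hv => Or.inl (hM v hv)⟩
  · refine ⟨m, ?_⟩
    rintro v (⟨b, β, hβne, hβM, rfl⟩ | ⟨b, rfl⟩)
    · rw [diagY_mul_xt]
      exact Or.inl ⟨a * b, β, hβne, hβM, rfl⟩
    · rw [diagY_mul_diagY]
      exact Or.inr ⟨a * b, rfl⟩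

theorem dgen_step_e (y : ℕ → ℕ → S) (m : ℕ) :
    ∀ x ∈ DGen y m, ∃ M, ∀ v ∈ EGen y M, x * v ∈ EGen y m := by
  rintro x (hx | ⟨a, rfl⟩)
  · obtain ⟨M, hM⟩ := egen_step y m x hx
    exact ⟨M, fun v hv => hM v (Or.inl hv)⟩
  · refine ⟨m, ?_⟩
    rintro v ⟨b, β, hβne, hβM, rfl⟩
    rw [diagY_mul_xt]
    exact ⟨a * b, β, hβne, hβM, rfl⟩

end KeyLemma
section KeyLemma2
set_option linter.unusedSectionVars false

variable {S : Type*} [CommSemigroup S] [Nonempty S]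

theorem ebar_mem_closure_dgen (e : Ultrafilter S) (y : ℕ → ℕ → S) (m : ℕ) :
    (fun _ => e : ℕ → Ultrafilter S) ∈ closure (DGen y m) := by
  rw [mem_closure_iff]
  intro O hO heO
  obtain ⟨I, u, hu, hsub⟩ := isOpen_pi_iff.mp hO _ heO
  have hB : ∀ i : I, ∃ B : Set S, B ∈ e ∧ {v : Ultrafilter S | B ∈ v} ⊆ u i := by
    rintro ⟨i, hi⟩
    obtain ⟨huo, hei⟩ := hu i hi
    obtain ⟨t, ⟨B, rfl⟩, het, hts⟩ :=
      ultrafilterBasis_is_basis.isOpen_iff.mp huo e hei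
    exact ⟨B, het, hts⟩
  choose B hBe hBu using hB
  have hC : (⋂ i : I, B i) ∈ e := Filter.iInter_mem.mpr hBe
  obtain ⟨c, hc⟩ := Ultrafilter.nonempty_of_mem hC
  refine ⟨diagY c, ?_, Or.inr ⟨c, rfl⟩⟩
  apply hsub
  intro i hi
  apply hBu ⟨i, hi⟩
  simpa [diagY] using Set.mem_iInter.mp hc ⟨i, hi⟩

theorem key_lemma (e : Ultrafilter S) (he : IsMinimalIdempotent e) (y : ℕ → ℕ → S)
    (B : Set S) (hB : B ∈ e) (n m : ℕ) :
    ∃ (a : S) (α : Finset ℕ), α.Nonempty ∧ (∀ t ∈ α, m < t) ∧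
      ∀ l ≤ n, a * wS y l α ∈ B := by
  set E : Set (ℕ → Ultrafilter S) := ⋂ k, closure (EGen y k) with hE
  set D : Set (ℕ → Ultrafilter S) := ⋂ k, closure (DGen y k) with hD
  set ebar : ℕ → Ultrafilter S := fun _ => e with hebar
  -- basic closure properties
  have hDD : ∀ p q : ℕ → Ultrafilter S, p ∈ D → q ∈ D → p * q ∈ D := fun p q hp hq =>
    mul_mem_iInter_closure _ _ _ (dgen_pure y) (dgen_step_d y) hp hq
  have hED : ∀ p q : ℕ → Ultrafilter S, p ∈ E → q ∈ D → p * q ∈ E := fun p q hp hq =>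
    mul_mem_iInter_closure _ _ _ (egen_pure y) (fun k x hx => egen_step y k x hx) hp hq
  have hDE : ∀ p q : ℕ → Ultrafilter S, p ∈ D → q ∈ E → p * q ∈ E := fun p q hp hq =>
    mul_mem_iInter_closure _ _ _ (dgen_pure y) (dgen_step_e y) hp hq
  have hEsubD : E ⊆ D := Set.iInter_mono fun k => closure_mono Set.subset_union_left
  have hEclosed : IsClosed E := isClosed_iInter fun _ => isClosed_closure
  have hEcompact : IsCompact E := hEclosed.isCompact
  have hEne : E.Nonempty := by
    rw [hE]
    apply IsCompact.nonempty_iInter_of_directed_nonempty_isCompact_isClosed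
    · intro i j
      refine ⟨max i j, closure_mono ?_, closure_mono ?_⟩ <;>
      · rintro x ⟨a, α, hne, hbig, rfl⟩
        exact ⟨a, α, hne, fun t ht => lt_of_le_of_lt (by omega) (hbig t ht), rfl⟩
    · intro k
      refine ⟨xt y (Classical.arbitrary S) {k + 1}, subset_closure ?_⟩
      refine ⟨Classical.arbitrary S, {k + 1}, ⟨k + 1, Finset.mem_singleton_self _⟩, ?_, rfl⟩
      intro t ht
      rw [Finset.mem_singleton] at ht
      omega
    · exact fun k => isClosed_closure.isCompact
    · exact fun k => isClosed_closure
  have hebarD : ebar ∈ D := Set.mem_iInter.mpr fun k => ebar_mem_closure_dgen e y k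
  have hebar_idem : ebar * ebar = ebar := by
    funext l
    exact he.1
  -- the compact subsemigroup L = E * ebar
  set L : Set (ℕ → Ultrafilter S) := (fun z => z * ebar) '' E with hL
  have hLsubE : L ⊆ E := by
    rintro _ ⟨z, hz, rfl⟩
    exact hED _ _ hz hebarD
  have hLne : L.Nonempty := hEne.image _
  have hLcompact : IsCompact L := hEcompact.image (cont_mul_right ebar)
  have hLmul : ∀ x ∈ L, ∀ z ∈ L, x * z ∈ L := by
    rintro x hx _ ⟨z', hz', rfl⟩
    refine ⟨x * z', hED _ _ (hLsubE hx) (hEsubD hz'), ?_⟩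
    show x * z' * ebar = x * (z' * ebar)
    exact mul_assoc x z' ebar
  obtain ⟨f₀, hf₀L, hf₀idem⟩ :=
    exists_idempotent_in_compact_subsemigroup cont_mul_right L hLne hLcompact hLmul
  have hf₀e : f₀ * ebar = f₀ := by
    obtain ⟨z, _, rfl⟩ := hf₀L
    rw [mul_assoc, hebar_idem]
  -- u = ebar * f₀ is an idempotent below ebar, hence equal to it
  set u : ℕ → Ultrafilter S := ebar * f₀ with hu
  have hu_idem : u * u = u := by
    rw [hu, mul_assoc, ← mul_assoc f₀ ebar f₀, hf₀e, hf₀idem]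
  have hu_right : u * ebar = u := by
    rw [hu, mul_assoc, hf₀e]
  have hu_left : ebar * u = u := by
    rw [hu, ← mul_assoc, hebar_idem]
  have hu_eq : u = ebar := by
    funext l
    exact he.2 (u l) (congrFun hu_idem l) (congrFun hu_right l) (congrFun hu_left l)
  have hebarE : ebar ∈ E := by
    have : ebar * f₀ ∈ E := hDE _ _ hebarD (hLsubE hf₀L)
    rwa [← hu, hu_eq] at this
  -- extraction
  have hOopen : IsOpen {x : ℕ → Ultrafilter S | ∀ l ∈ Finset.range (n + 1), B ∈ x l} := by
    have : {x : ℕ → Ultrafilter S | ∀ l ∈ Finset.range (n + 1), B ∈ x l} =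
        ⋂ l ∈ Finset.range (n + 1), (fun x : ℕ → Ultrafilter S => x l) ⁻¹' {v : Ultrafilter S | B ∈ v} := by
      ext x
      simp
    rw [this]
    exact isOpen_biInter_finset fun l _ =>
      (ultrafilter_isOpen_basic B).preimage (continuous_apply l)
  have hememO : ebar ∈ {x : ℕ → Ultrafilter S | ∀ l ∈ Finset.range (n + 1), B ∈ x l} := fun l _ => hB
  have hEm : ebar ∈ closure (EGen y m) := Set.mem_iInter.mp hebarE m
  obtain ⟨x, hxO, hxE⟩ := (mem_closure_iff.mp hEm) _ hOopen hememO
  obtain ⟨a, α, hne, hbig, rfl⟩ := hxE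
  refine ⟨a, α, hne, hbig, ?_⟩
  intro l hl
  have := hxO l (Finset.mem_range.mpr (Nat.lt_succ_of_le hl))
  simpa [xt] using this
end KeyLemma2
section Build
set_option linter.unusedSectionVars false

variable {S : Type*} [CommSemigroup S] [Nonempty S]

/-- The `n`-th term `a_n · ∏_{t ∈ α_n} y l t` of the constructed sequence. -/
noncomputable def xterm (y : ℕ → ℕ → S) (b : ℕ → S × Finset ℕ) (i l : ℕ) : S :=
  (b i).1 * wS y l (b i).2

/-- All ordered products of terms `xterm y b i (g i)`, `i ∈ β ⊆ [0, n)`, `g i ≤ i`. -/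
noncomputable def AllProds (y : ℕ → ℕ → S) (b : ℕ → S × Finset ℕ) (n : ℕ) : Set S :=
  {s | ∃ β : Finset ℕ, β.Nonempty ∧ (∀ i ∈ β, i < n) ∧ ∃ g : ℕ → ℕ, (∀ i, g i ≤ i) ∧
    (↑s : WithOne S) = oListProd (fun i => (↑(xterm y b i (g i)) : WithOne S)) β}

theorem allProds_finite (y : ℕ → ℕ → S) (b : ℕ → S × Finset ℕ) (n : ℕ) :
    (AllProds y b n).Finite := by
  classical
  set dec : (Finset (Fin n) × (Fin n → Fin n)) → ℕ → ℕ :=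
    fun c i => if hi : i < n then (c.2 ⟨i, hi⟩ : ℕ) else 0 with hdec
  have hfin : (⋃ c : Finset (Fin n) × (Fin n → Fin n),
      {s : S | (↑s : WithOne S) =
        oListProd (fun i => (↑(xterm y b i (dec c i)) : WithOne S)) (c.1.image Fin.val)}).Finite := by
    apply Set.finite_iUnion
    intro c
    apply Set.Subsingleton.finite
    intro s hs s' hs'
    apply WithOne.coe_inj.mp
    rw [Set.mem_setOf_eq] at hs hs'
    rw [hs, hs']
  apply Set.Finite.subset hfin
  rintro s ⟨β, hβne, hβlt, g, hg, hs⟩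
  have hβn : ∀ i ∈ β, i < n := hβlt
  refine Set.mem_iUnion.mpr ⟨(β.attachFin hβn, fun j => ⟨g j, lt_of_le_of_lt (hg j) j.2⟩), ?_⟩
  have himg : (β.attachFin hβn).image Fin.val = β := by
    ext a
    simp only [Finset.mem_image]
    constructor
    · rintro ⟨j, hj, rfl⟩
      exact (Finset.mem_attachFin hβn).mp hj
    · intro ha
      exact ⟨⟨a, hβn a ha⟩, (Finset.mem_attachFin hβn).mpr ha, rfl⟩
  rw [Set.mem_setOf_eq, himg, hs]
  apply oListProd_congr
  intro t ht
  have htn : t < n := hβn t ht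
  simp only [hdec, dif_pos htn]

/-- The conditions the `n`-th chosen pair must satisfy, relative to previous choices `b`. -/
noncomputable def Good (y : ℕ → ℕ → S) (As : Set S) (b : ℕ → S × Finset ℕ) (n : ℕ)
    (p : S × Finset ℕ) : Prop :=
  p.2.Nonempty ∧ (∀ i < n, ∀ s ∈ (b i).2, ∀ t ∈ p.2, s < t) ∧
    ∀ l ≤ n, p.1 * wS y l p.2 ∈ As ∧
      ∀ s ∈ AllProds y b n, s * (p.1 * wS y l p.2) ∈ As

theorem allProds_congr (y : ℕ → ℕ → S) {b b' : ℕ → S × Finset ℕ} {n : ℕ}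
    (h : ∀ i < n, b i = b' i) : AllProds y b n = AllProds y b' n := by
  ext s
  constructor <;>
  · rintro ⟨β, hβne, hβlt, g, hg, hs⟩
    refine ⟨β, hβne, hβlt, g, hg, ?_⟩
    rw [hs]
    apply oListProd_congr
    intro t ht
    have := h t (hβlt t ht)
    simp [xterm, this]

theorem good_congr (y : ℕ → ℕ → S) (As : Set S) {b b' : ℕ → S × Finset ℕ} {n : ℕ}
    (h : ∀ i < n, b i = b' i) (p : S × Finset ℕ) :
    Good y As b n p ↔ Good y As b' n p := by
  unfold Good
  rw [allProds_congr y h]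
  constructor <;>
  · rintro ⟨h1, h2, h3⟩
    refine ⟨h1, ?_, h3⟩
    intro i hi
    first
      | rw [← h i hi]; exact h2 i hi
      | rw [h i hi]; exact h2 i hi

open Classical in
/-- The recursive construction: at each stage, choose a pair satisfying `Good` if possible. -/
noncomputable def build (y : ℕ → ℕ → S) (As : Set S) : ℕ → S × Finset ℕ
  | n =>
    if h : ∃ p, Good y As
        (fun i => if hi : i < n then build y As i else (Classical.arbitrary S, ∅)) n p
      then h.choose else (Classical.arbitrary S, ∅)
  termination_by n => n
  decreasing_by all_goals exact hi

theorem build_spec (y : ℕ → ℕ → S) (As : Set S) (n : ℕ)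
    (h : ∃ p, Good y As
      (fun i => if hi : i < n then build y As i else (Classical.arbitrary S, ∅)) n p) :
    Good y As
      (fun i => if hi : i < n then build y As i else (Classical.arbitrary S, ∅)) n
      (build y As n) := by
  rw [build, dif_pos h]
  exact h.choose_spec

/-- Provided all earlier stages are `Good`, every admissible product lies in `As`. -/
theorem inv_of (y : ℕ → ℕ → S) (As : Set S) (b : ℕ → S × Finset ℕ) (N : ℕ)
    (hG : ∀ j < N, Good y As b j (b j)) :
    ∀ s ∈ AllProds y b N, s ∈ As := by
  rintro s ⟨β, hβne, hβlt, g, hg, hs⟩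
  set j := β.max' hβne with hj
  have hjβ : j ∈ β := β.max'_mem hβne
  have hjN : j < N := hβlt j hjβ
  have hGj := hG j hjN
  have hterm := hGj.2.2 (g j) (hg j)
  by_cases hβ' : (β.erase j).Nonempty
  · have hsplit : β = (β.erase j) ∪ {j} := by
      ext a
      simp only [Finset.mem_union, Finset.mem_erase, Finset.mem_singleton]
      constructor
      · intro ha
        by_cases h : a = j
        · exact Or.inr h
        · exact Or.inl ⟨h, ha⟩
      · rintro (⟨_, ha⟩ | rfl) <;> [exact ha; exact hjβ]
    have hlt : ∀ a ∈ β.erase j, ∀ t ∈ ({j} : Finset ℕ), a < t := by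
      intro a ha t ht
      rw [Finset.mem_singleton] at ht
      subst ht
      rcases Finset.mem_erase.mp ha with ⟨hne, haβ⟩
      exact lt_of_le_of_ne (β.le_max' a haβ) hne
    obtain ⟨s', hs'⟩ := exists_coe_oListProd (fun i => xterm y b i (g i)) hβ'
    have hs'mem : s' ∈ AllProds y b j := by
      refine ⟨β.erase j, hβ', ?_, g, hg, hs'.symm⟩
      intro i hi
      rcases Finset.mem_erase.mp hi with ⟨hne, hiβ⟩
      exact lt_of_le_of_ne (β.le_max' i hiβ) hne
    have hseq : s = s' * xterm y b j (g j) := by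
      apply WithOne.coe_inj.mp
      rw [hs, hsplit, oListProd_union _ hlt, oListProd_singleton, hs', ← WithOne.coe_mul]
    rw [hseq]
    exact hterm.2 s' hs'mem
  · have hβsing : β = {j} := by
      rw [Finset.not_nonempty_iff_eq_empty] at hβ'
      ext a
      rw [Finset.mem_singleton]
      constructor
      · intro ha
        by_contra h
        have : a ∈ β.erase j := Finset.mem_erase.mpr ⟨h, ha⟩
        simp [hβ'] at this
      · rintro rfl; exact hjβ
    have hseq : s = xterm y b j (g j) := by
      apply WithOne.coe_inj.mp
      rw [hs, hβsing, oListProd_singleton]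
    rw [hseq]
    exact hterm.1

theorem exists_good (e : Ultrafilter S) (he : IsMinimalIdempotent e) (y : ℕ → ℕ → S)
    (As : Set S) (hAs : As ∈ e) (hstep : ∀ s ∈ As, {t | s * t ∈ As} ∈ e)
    (b : ℕ → S × Finset ℕ) (n : ℕ) (hInv : ∀ s ∈ AllProds y b n, s ∈ As) :
    ∃ p, Good y As b n p := by
  have hBig : {t | ∀ s ∈ AllProds y b n, s * t ∈ As} ∈ e := by
    have : {t | ∀ s ∈ AllProds y b n, s * t ∈ As} =
        ⋂ s ∈ AllProds y b n, {t | s * t ∈ As} := by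
      ext t
      simp
    rw [this]
    exact (Filter.biInter_mem (allProds_finite y b n)).mpr
      fun s hs => hstep s (hInv s hs)
  have hBe : (As ∩ {t | ∀ s ∈ AllProds y b n, s * t ∈ As}) ∈ e :=
    Filter.inter_mem hAs hBig
  obtain ⟨a, α, hαne, hαbig, hαmem⟩ := key_lemma e he y _ hBe n
    ((Finset.range n).sup fun i => ((b i).2).sup id)
  refine ⟨(a, α), hαne, ?_, ?_⟩
  · intro i hi s hsi t ht
    have h1 : s ≤ ((b i).2).sup id := Finset.le_sup (f := id) hsi
    have h2 : ((b i).2).sup id ≤ (Finset.range n).sup fun i => ((b i).2).sup id :=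
      Finset.le_sup (f := fun i => ((b i).2).sup id) (Finset.mem_range.mpr hi)
    exact lt_of_le_of_lt (le_trans h1 h2) (hαbig t ht)
  · intro l hl
    obtain ⟨h1, h2⟩ := hαmem l hl
    exact ⟨h1, h2⟩

end Build

/-- **The Central Sets Theorem.**  Let `S` be a commutative semigroup, `e` a minimal
idempotent in `βS` and `A ∈ e`.  For each `l ∈ ℕ` let `⟨y l n⟩ₙ` be a sequence in `S`.
Then there are a sequence `⟨a n⟩ₙ` in `S` and a sequence `α 0 < α 1 < …` in `P_f(ω)`
such that for every `g` with `g n ≤ n`,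
`FP(⟨a n * ∏_{t∈α n} y (g n) t⟩ₙ) ⊆ A`. -/
theorem central_sets_theorem
    {S : Type*} [CommSemigroup S] (e : Ultrafilter S)
    (he : IsMinimalIdempotent e) (A : Set S) (hA : A ∈ e)
    (y : ℕ → ℕ → S) :
    ∃ (a : ℕ → S) (α : ℕ → Finset ℕ),
      (∀ n, (α n).Nonempty) ∧
      (∀ n, ∀ s ∈ α n, ∀ t ∈ α (n + 1), s < t) ∧
      ∀ g : ℕ → ℕ, (∀ n, g n ≤ n) →
        ∀ β : Finset ℕ, β.Nonempty →
          ∃ p ∈ A, (p : WithOne S) =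
            oListProd (fun n => (a n : WithOne S) * oProd (y (g n)) (α n)) β := by
  obtain ⟨x0, -⟩ := Ultrafilter.nonempty_of_mem hA
  haveI : Nonempty S := ⟨x0⟩
  set As : Set S := A ∩ {x | {t | x * t ∈ A} ∈ e} with hAsdef
  have hAsub : As ⊆ A := Set.inter_subset_left
  have hA2 : {s | {t | s * t ∈ A} ∈ e} ∈ e := by
    have h1 : A ∈ e * e := by rw [he.1]; exact hA
    exact ultra_mem_mul.mp h1
  have hAse : As ∈ e := Filter.inter_mem hA hA2
  have hstep : ∀ x ∈ As, {t | x * t ∈ As} ∈ e := by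
    intro x hx
    obtain ⟨hx1, hx2⟩ := hx
    have h3 : {s | {t | s * t ∈ {u | x * u ∈ A}} ∈ e} ∈ e := by
      have h5 : {u | x * u ∈ A} ∈ e * e := by rw [he.1]; exact hx2
      exact ultra_mem_mul.mp h5
    have h4 : {s | {t | (x * s) * t ∈ A} ∈ e} ∈ e := by
      refine Filter.mem_of_superset h3 ?_
      intro s hs
      simp only [Set.mem_setOf_eq] at hs ⊢
      have heq : {t | (x * s) * t ∈ A} = {t | s * t ∈ {u | x * u ∈ A}} := by
        ext t
        simp [mul_assoc]
      rw [heq]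
      exact hs
    have h6 := Filter.inter_mem hx2 h4
    refine Filter.mem_of_superset h6 ?_
    rintro t ⟨ht1, ht2⟩
    exact ⟨ht1, ht2⟩
  set b := build y As with hb
  have hGood : ∀ n, Good y As b n (b n) := by
    intro n
    induction n using Nat.strong_induction_on with
    | _ n IH =>
      have hInv := inv_of y As b n IH
      have hex := exists_good e he y As hAse hstep b n hInv
      have hcong : ∀ i < n,
          (fun i => if hi : i < n then build y As i else (Classical.arbitrary S, ∅)) i = b i :=
        fun i hi => dif_pos hi
      have hex' : ∃ p, Good y As
          (fun i => if hi : i < n then build y As i else (Classical.arbitrary S, ∅)) n p := by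
        obtain ⟨p, hp⟩ := hex
        exact ⟨p, (good_congr y As hcong p).mpr hp⟩
      have hres := build_spec y As n hex'
      exact (good_congr y As hcong _).mp hres
  refine ⟨fun n => (b n).1, fun n => (b n).2, fun n => (hGood n).1, ?_, ?_⟩
  · intro n s hs t ht
    exact (hGood (n + 1)).2.1 n (Nat.lt_succ_self n) s hs t ht
  · intro g hg β hβne
    obtain ⟨s, hs⟩ := exists_coe_oListProd (fun i => xterm y b i (g i)) hβne
    have hmem : s ∈ AllProds y b (β.max' hβne + 1) :=
      ⟨β, hβne, fun i hi => Nat.lt_succ_of_le (β.le_max' i hi), g, hg, hs.symm⟩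
    have hsAs : s ∈ As := inv_of y As b _ (fun j _ => hGood j) s hmem
    refine ⟨s, hAsub hsAs, ?_⟩
    rw [← hs]
    apply oListProd_congr
    intro t ht
    show (↑((b t).1 * wS y (g t) (b t).2) : WithOne S) = ↑(b t).1 * oProd (y (g t)) ((b t).2)
    rw [WithOne.coe_mul, coe_wS y (g t) ((hGood t).1)]
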